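/- Suppose t₁t₂ = 1 with 0 < t₁ < 1 < t₂, and C < 0 < D with D + C·t₂ > 0. Then for all sufficiently large m and sufficiently small ε > 0, for every complex z with |z| = t₂ − ε, one has |z^{m+1}(t₁ − t₂)(C + Dz)| < |t₂^{m+1}(1 − z t₂)(Ct₁ + D) + t₁^{m+1}(z t₁ − 1)(Ct₂ + D)|. -/

import Mathlib

set_option maxHeartbeats 800000

lemma circle_ratio_aux (r a b : ℝ) (z : ℂ) (hz : ‖z‖ = r)
    (ha : 0 ≤ a) (hab : a ≤ b) (hbr : b ≤ r) :
    (r - b) * ‖z - (a:ℂ)‖ ≤ (r - a) * ‖z - (b:ℂ)‖ := by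
  have hx : |z.re| ≤ r := hz ▸ Complex.abs_re_le_norm z
  obtain ⟨hx1, hx2⟩ := abs_le.mp hx
  have hr2 : z.re * z.re + z.im * z.im = r ^ 2 := by
    have := Complex.sq_norm z
    rw [hz, Complex.normSq_apply] at this
    linarith
  have hy2 : z.im ^ 2 = r ^ 2 - z.re ^ 2 := by nlinarith [hr2]
  have e1 : ‖z - (a:ℂ)‖ ^ 2 = (z.re - a)^2 + z.im^2 := by
    rw [Complex.sq_norm, Complex.normSq_apply]
    simp [Complex.sub_re, Complex.sub_im]
    ring
  have e2 : ‖z - (b:ℂ)‖ ^ 2 = (z.re - b)^2 + z.im^2 := by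
    rw [Complex.sq_norm, Complex.normSq_apply]
    simp [Complex.sub_re, Complex.sub_im]
    ring
  have hXn : 0 ≤ ‖z - (a:ℂ)‖ := norm_nonneg _
  have hYn : 0 ≤ ‖z - (b:ℂ)‖ := norm_nonneg _
  have hint : 0 ≤ (r - z.re) * (b - a) * (r^2 - a*b) := by
    apply mul_nonneg (mul_nonneg (by linarith) (by linarith))
    nlinarith
  have hsq : ((r - b) * ‖z - (a:ℂ)‖)^2 ≤ ((r - a) * ‖z - (b:ℂ)‖)^2 := by
    rw [mul_pow, mul_pow, e1, e2, hy2]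
    nlinarith [hint]
  nlinarith [hsq, mul_nonneg (by linarith : (0:ℝ) ≤ r - b) hXn, mul_nonneg (by linarith : (0:ℝ) ≤ r - a) hYn]

theorem rouche_ineq_ac_pos_CD_neg
    (t₁ t₂ C D : ℝ) (hprod : t₁ * t₂ = 1)
    (h1 : 0 < t₁) (h2 : t₁ < 1) (h3 : 1 < t₂)
    (hC : C < 0) (hD : 0 < D) (hDC : D + C * t₂ > 0) :
    ∃ M : ℕ, ∃ ε₀ > (0 : ℝ), ∀ m ≥ M, ∀ ε : ℝ, 0 < ε → ε < ε₀ →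
      ∀ z : ℂ, ‖z‖ = t₂ - ε →
        ‖z ^ (m + 1) * ((t₁ : ℂ) - t₂) * ((C : ℂ) + D * z)‖
          < ‖(t₂ : ℂ) ^ (m + 1) * (1 - z * t₂) * ((C : ℂ) * t₁ + D)
              + (t₁ : ℂ) ^ (m + 1) * (z * t₁ - 1) * ((C : ℂ) * t₂ + D)‖ := by
  have ht21 : 0 < t₂ - t₁ := by linarith
  obtain ⟨M, hM⟩ := exists_nat_gt (2 * t₂ / (t₂ - t₁))
  have hM' : 2 * t₂ < (M:ℝ) * (t₂ - t₁) := by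
    rw [div_lt_iff₀ ht21] at hM; linarith
  refine ⟨M, (t₂ - t₁)/2, by linarith, ?_⟩
  intro m hm ε hε hεε z hz
  have hmM : (M:ℝ) ≤ (m:ℝ) := Nat.cast_le.mpr hm
  obtain ⟨r, hrdef⟩ : ∃ x : ℝ, x = t₂ - ε := ⟨_, rfl⟩
  rw [← hrdef] at hz
  -- basic bounds
  have hrt2 : r < t₂ := by rw [hrdef]; linarith
  have ht1t2sum : 2 < t₁ + t₂ := by
    have hh := mul_pos (by linarith : (0:ℝ) < t₂ - 1) (by linarith : (0:ℝ) < 1 - t₁)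
    linarith only [hh, hprod]
  have hr1 : 1 < r := by rw [hrdef]; linarith
  have hrt1 : (t₂ - t₁)/2 < r - t₁ := by rw [hrdef]; linarith
  have hrpos : (0:ℝ) < r := by linarith
  have hrne : r ≠ 0 := ne_of_gt hrpos
  -- sign facts
  have hC1 : 0 < C * t₂ + D := by linarith
  have hC2 : 0 < C * t₁ + D := by
    have hh := mul_pos (neg_pos.mpr hC) ht21
    linarith only [hh, hC1]
  have hctt : C * t₁ * t₂ = C := by rw [mul_assoc, hprod, mul_one]
  have hCt1 : 0 < D * t₁ + C := by linarith only [mul_pos hDC h1, hctt]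
  have hDrC : 0 < D * r + C := by
    have hh := mul_pos hD (by linarith : (0:ℝ) < r - t₁)
    linarith only [hh, hCt1]
  -- abbreviations (opaque)
  obtain ⟨P₂, hP2def⟩ : ∃ x : ℝ, x = C * t₁ + D := ⟨_, rfl⟩
  obtain ⟨P₁, hP1def⟩ : ∃ x : ℝ, x = C * t₂ + D := ⟨_, rfl⟩
  obtain ⟨A, hAdef⟩ : ∃ x : ℝ, x = t₂^(m+1) * P₂ - t₁^(m+1) * P₁ := ⟨_, rfl⟩
  obtain ⟨Q, hQdef⟩ : ∃ x : ℝ, x = t₂^(m+2) * P₂ - t₁^(m+2) * P₁ := ⟨_, rfl⟩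
  have hP1pos : 0 < P₁ := by rw [hP1def]; linarith
  have hP21 : P₁ < P₂ := by
    have hh := mul_pos (neg_pos.mpr hC) ht21
    rw [hP1def, hP2def]; linarith only [hh]
  have hP2pos : 0 < P₂ := by linarith
  have hpow1 : t₁^(m+1) ≤ t₂^(m+1) := pow_le_pow_left₀ h1.le (by linarith) _
  have hpow2 : t₁^(m+2) ≤ t₂^(m+2) := pow_le_pow_left₀ h1.le (by linarith) _
  have hp1pos : (0:ℝ) < t₁^(m+1) := pow_pos h1 _
  have hp2pos : (0:ℝ) < t₁^(m+2) := pow_pos h1 _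
  have ht2p1 : (0:ℝ) < t₂^(m+1) := pow_pos (by linarith) _
  have hQpos : 0 < Q := by
    have k1 : 0 ≤ (t₂^(m+2) - t₁^(m+2)) * P₂ := mul_nonneg (by linarith) hP2pos.le
    have k2 : 0 < t₁^(m+2) * (P₂ - P₁) := mul_pos hp2pos (by linarith)
    have k3 : Q = (t₂^(m+2) - t₁^(m+2)) * P₂ + t₁^(m+2) * (P₂ - P₁) := by
      rw [hQdef]; ring
    linarith
  have hQne : Q ≠ 0 := ne_of_gt hQpos
  have hDne : D ≠ 0 := ne_of_gt hD
  obtain ⟨a, hadef⟩ : ∃ x : ℝ, x = -C/D := ⟨_, rfl⟩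
  obtain ⟨b, hbdef⟩ : ∃ x : ℝ, x = A/Q := ⟨_, rfl⟩
  have hapos : 0 < a := by rw [hadef]; exact div_pos (neg_pos.mpr hC) hD
  have hDa : D * a = -C := by
    rw [hadef]; field_simp
  have hident : D * A + C * Q = P₁ * P₂ * (t₂^(m+1) - t₁^(m+1)) := by
    rw [hAdef, hQdef, hP1def, hP2def]; ring
  have hab : a ≤ b := by
    rw [hadef, hbdef, div_le_div_iff₀ hD hQpos]
    have k1 : 0 ≤ P₁ * P₂ * (t₂^(m+1) - t₁^(m+1)) :=
      mul_nonneg (mul_nonneg hP1pos.le hP2pos.le) (by linarith)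
    linarith [hident]
  have hbt1 : b < t₁ := by
    rw [hbdef, div_lt_iff₀ hQpos]
    have ht1sq : t₁^2 < 1 := by nlinarith [mul_pos h1 h1, h1, h2]
    have e : t₁ * Q - A = t₂^(m+1) * P₂ * (t₁ * t₂ - 1) + t₁^(m+1) * P₁ * (1 - t₁^2) := by
      rw [hAdef, hQdef]; ring
    rw [hprod] at e
    have k1 : 0 < t₁^(m+1) * P₁ * (1 - t₁^2) :=
      mul_pos (mul_pos hp1pos hP1pos) (by linarith)
    linarith only [e, k1]
  have hbpos : 0 < b := lt_of_lt_of_le hapos hab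
  have hbr : b < r := by linarith
  have hQb : Q * b = A := by
    rw [hbdef]; field_simp
  -- Bernoulli step
  have hber : r^(m+1) + ((m:ℝ)+1) * ε * r^m ≤ t₂^(m+1) := by
    have hb1 : (1:ℝ) + ((m+1:ℕ):ℝ) * (ε/r) ≤ (1 + ε/r)^(m+1) :=
      one_add_mul_le_pow (by linarith [div_pos hε hrpos] : (-2:ℝ) ≤ ε/r) (m+1)
    have hrt : r * (1 + ε/r) = t₂ := by
      field_simp
      linarith
    have h5 : r^(m+1) * ((1:ℝ) + ((m+1:ℕ):ℝ) * (ε/r)) ≤ r^(m+1) * (1 + ε/r)^(m+1) :=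
      mul_le_mul_of_nonneg_left hb1 (pow_nonneg hrpos.le _)
    have h6 : r^(m+1) * (1 + ε/r)^(m+1) = t₂^(m+1) := by
      rw [← mul_pow, hrt]
    have h7 : r^(m+1) * ((1:ℝ) + ((m+1:ℕ):ℝ) * (ε/r)) = r^(m+1) + ((m:ℝ)+1) * ε * r^m := by
      push_cast
      rw [pow_succ]
      field_simp
    rw [h7, h6] at h5
    exact h5
  have hmr : r ≤ ((m:ℝ)+1) * (r - t₁) := by
    have hh : (M:ℝ) * ((t₂-t₁)/2) ≤ ((m:ℝ)+1) * (r - t₁) := by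
      apply mul_le_mul (by linarith) (by linarith) (by linarith) (by positivity)
    linarith
  have hstep : r^(m+1) * (t₂ - t₁) ≤ t₂^(m+1) * (r - t₁) := by
    have hmul : (r^(m+1) + ((m:ℝ)+1) * ε * r^m) * (r - t₁) ≤ t₂^(m+1) * (r - t₁) :=
      mul_le_mul_of_nonneg_right hber (by linarith)
    have hh : 0 ≤ ε * r^m * (((m:ℝ)+1) * (r - t₁) - r) :=
      mul_nonneg (mul_nonneg hε.le (pow_nonneg hrpos.le m)) (by linarith)
    have hre : t₂ - t₁ = (r - t₁) + ε := by rw [hrdef]; ring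
    have hps2 : ε * r^(m+1) = ε * r^m * r := by rw [pow_succ]; ring
    calc r^(m+1) * (t₂ - t₁) = r^(m+1)*(r-t₁) + ε*r^m*r := by
          rw [hre]; linear_combination hps2
      _ ≤ r^(m+1)*(r-t₁) + ((m:ℝ)+1)*ε*r^m*(r-t₁) := by linarith [hh]
      _ = (r^(m+1) + ((m:ℝ)+1)*ε*r^m)*(r-t₁) := by ring
      _ ≤ t₂^(m+1)*(r-t₁) := hmul
  -- key scalar inequality
  have hDrlt : D * r + C < t₂ * P₂ := by
    have hDr : D * r = D * t₂ - D * ε := by rw [hrdef]; ring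
    have hDe : 0 < D * ε := mul_pos hD hε
    rw [hP2def]
    linarith only [hctt, hDr, hDe]
  have hkey : r^(m+1) * (t₂ - t₁) * (D * r + C) < Q * r - A := by
    have ht1r : t₁ * r = 1 - t₁ * ε := by
      rw [hrdef]; linear_combination hprod
    have h2t : 0 < 1 - t₁ * r := by
      have hh := mul_pos h1 hε
      linarith [ht1r]
    have e2 : Q * r - A = t₂^(m+1) * P₂ * (t₂ * (r - t₁)) + t₁^(m+1) * P₁ * (1 - t₁ * r) := by
      have hc : t₂^(m+1) * P₂ * (t₁ * t₂) = t₂^(m+1) * P₂ := by rw [hprod, mul_one]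
      rw [hAdef, hQdef]
      linear_combination hc
    have hint2 : 0 ≤ t₁^(m+1) * P₁ * (1 - t₁ * r) :=
      mul_nonneg (mul_nonneg hp1pos.le hP1pos.le) h2t.le
    calc r^(m+1) * (t₂ - t₁) * (D * r + C)
        < r^(m+1) * (t₂ - t₁) * (t₂ * P₂) :=
          mul_lt_mul_of_pos_left hDrlt (mul_pos (pow_pos hrpos _) ht21)
      _ ≤ t₂^(m+1) * (r - t₁) * (t₂ * P₂) :=
          mul_le_mul_of_nonneg_right hstep (mul_nonneg (by linarith) hP2pos.le)
      _ ≤ Q * r - A := by linarith [e2, hint2]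
  -- geometry on the circle
  have hgeo := circle_ratio_aux r a b z hz hapos.le hab hbr.le
  have hzb_lb : r - b ≤ ‖z - (b:ℂ)‖ := by
    have h := norm_sub_norm_le z ((b:ℂ))
    rw [hz] at h
    have hbb : ‖((b:ℂ))‖ = b := by
      rw [Complex.norm_real, Real.norm_eq_abs, abs_of_pos hbpos]
    rw [hbb] at h
    exact h
  have hYpos : 0 < ‖z - (b:ℂ)‖ := lt_of_lt_of_le (by linarith) hzb_lb
  -- rewrite LHS
  have hLa : (C:ℂ) + (D:ℂ) * z = (D:ℂ) * (z - (a:ℂ)) := by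
    have hc : (D:ℂ) * (a:ℂ) = -(C:ℂ) := by exact_mod_cast congrArg (fun x : ℝ => (x:ℂ)) hDa
    linear_combination hc
  have eL : ‖z ^ (m+1) * ((t₁:ℂ) - t₂) * ((C:ℂ) + D * z)‖
      = r^(m+1) * (t₂ - t₁) * (D * ‖z - (a:ℂ)‖) := by
    rw [hLa, norm_mul, norm_mul, norm_pow, hz]
    have h1' : ((t₁:ℂ) - t₂) = (((t₁ - t₂ : ℝ)):ℂ) := by push_cast; ring
    rw [h1', Complex.norm_real, Real.norm_eq_abs, abs_of_neg (by linarith : t₁ - t₂ < 0), norm_mul,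
      Complex.norm_real, Real.norm_eq_abs, abs_of_pos hD]
    ring
  -- rewrite RHS
  have hRa : (t₂:ℂ)^(m+1) * (1 - z * t₂) * ((C:ℂ) * t₁ + D)
      + (t₁:ℂ)^(m+1) * (z * t₁ - 1) * ((C:ℂ) * t₂ + D) = (Q:ℂ) * ((b:ℂ) - z) := by
    have hQb' : (Q:ℂ) * (b:ℂ) = (A:ℂ) := by exact_mod_cast congrArg (fun x : ℝ => (x:ℂ)) hQb
    have hAq : (A:ℂ) = (t₂:ℂ)^(m+1) * ((C:ℂ)*t₁ + D) - (t₁:ℂ)^(m+1) * ((C:ℂ)*t₂ + D) := by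
      rw [hAdef, hP1def, hP2def]; push_cast; ring
    have hQq : (Q:ℂ) = (t₂:ℂ)^(m+2) * ((C:ℂ)*t₁ + D) - (t₁:ℂ)^(m+2) * ((C:ℂ)*t₂ + D) := by
      rw [hQdef, hP1def, hP2def]; push_cast; ring
    have hqb2 := hQb'
    rw [hAq, hQq] at hqb2
    rw [hQq]
    linear_combination -hqb2
  have eR : ‖(t₂:ℂ)^(m+1) * (1 - z * t₂) * ((C:ℂ) * t₁ + D)
      + (t₁:ℂ)^(m+1) * (z * t₁ - 1) * ((C:ℂ) * t₂ + D)‖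
      = Q * ‖z - (b:ℂ)‖ := by
    rw [hRa, norm_mul, Complex.norm_real, Real.norm_eq_abs, abs_of_pos hQpos, norm_sub_rev]
  rw [eL, eR]
  -- final assembly
  have hgeo2 : (r - b) * (D * ‖z - (a:ℂ)‖) ≤ (D * r + C) * ‖z - (b:ℂ)‖ := by
    have h := mul_le_mul_of_nonneg_left hgeo hD.le
    have hz2 : D * (r - a) = D * r + C := by linear_combination -hDa
    calc (r - b) * (D * ‖z - (a:ℂ)‖) = D * ((r - b) * ‖z - (a:ℂ)‖) := by ring
      _ ≤ D * ((r - a) * ‖z - (b:ℂ)‖) := h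
      _ = (D * (r - a)) * ‖z - (b:ℂ)‖ := by ring
      _ = (D * r + C) * ‖z - (b:ℂ)‖ := by rw [hz2]
  have final : (r^(m+1) * (t₂ - t₁) * (D * ‖z - (a:ℂ)‖)) * (r - b)
      < (Q * ‖z - (b:ℂ)‖) * (r - b) := by
    calc (r^(m+1) * (t₂ - t₁) * (D * ‖z - (a:ℂ)‖)) * (r - b)
        = (r^(m+1) * (t₂ - t₁)) * ((r - b) * (D * ‖z - (a:ℂ)‖)) := by ring
      _ ≤ (r^(m+1) * (t₂ - t₁)) * ((D * r + C) * ‖z - (b:ℂ)‖) :=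
          mul_le_mul_of_nonneg_left hgeo2 (mul_nonneg (pow_nonneg hrpos.le _) ht21.le)
      _ = (r^(m+1) * (t₂ - t₁) * (D * r + C)) * ‖z - (b:ℂ)‖ := by ring
      _ < (Q * r - A) * ‖z - (b:ℂ)‖ := mul_lt_mul_of_pos_right hkey hYpos
      _ = (Q * ‖z - (b:ℂ)‖) * (r - b) := by
          have hqq : Q * r - A = Q * (r - b) := by rw [← hQb]; ring
          rw [hqq]; ring
  exact lt_of_mul_lt_mul_right final (by linarith : (0:ℝ) ≤ r - b)
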